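/- For a scalar M > 0, the set {X ∈ B(H) : 0 < X ≤ M·I} is C*-log-convex. -/

import Mathlib

noncomputable section

/-- A subset of B(H) is C*-convex if it is closed under C*-convex combinations. -/
def CstarConvex {H : Type*} [NormedAddCommGroup H] [InnerProductSpace ℂ H]
    [CompleteSpace H] (K : Set (H →L[ℂ] H)) : Prop :=
  ∀ (n : ℕ) (X C : Fin n → H →L[ℂ] H),
    (∀ i, X i ∈ K) → ∑ i, star (C i) * C i = 1 →
      ∑ i, star (C i) * X i * C i ∈ K

/-- A subset of B(H) is C*-log-convex if it is closed under harmonic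
C*-convex combinations (Σᵢ Cᵢ* Xᵢ⁻¹ Cᵢ)⁻¹. -/
def CstarLogConvex {H : Type*} [NormedAddCommGroup H] [InnerProductSpace ℂ H]
    [CompleteSpace H] (K : Set (H →L[ℂ] H)) : Prop :=
  ∀ (n : ℕ) (X C : Fin n → H →L[ℂ] H),
    (∀ i, X i ∈ K) → ∑ i, star (C i) * C i = 1 →
      Ring.inverse (∑ i, star (C i) * Ring.inverse (X i) * C i) ∈ K

set_option synthInstance.maxHeartbeats 1000000
set_option maxHeartbeats 1000000

/-- For M > 0, the set {X : 0 < X ≤ M·I} is C*-log-convex. -/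
theorem cstarLogConvex_interval {H : Type*} [NormedAddCommGroup H]
    [InnerProductSpace ℂ H] [CompleteSpace H] (M : ℝ) (hM : 0 < M) :
    CstarLogConvex {X : H →L[ℂ] H | 0 ≤ X ∧ IsUnit X ∧ X ≤ M • (1 : H →L[ℂ] H)} := by
  intro n X C hX hC
  have hMne : M ≠ 0 := hM.ne'
  -- the unit `M • 1`
  let v : (H →L[ℂ] H)ˣ :=
    ⟨M • 1, M⁻¹ • 1, by rw [smul_mul_smul_comm]; simp [hMne],
      by rw [smul_mul_smul_comm]; simp [hMne]⟩
  have hv0 : (0 : H →L[ℂ] H) ≤ (v : H →L[ℂ] H) := smul_nonneg hM.le zero_le_one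
  have hvinv : (↑v⁻¹ : H →L[ℂ] H) = M⁻¹ • 1 := rfl
  have hvinv0 : (0 : H →L[ℂ] H) ≤ (↑v⁻¹ : H →L[ℂ] H) := by
    rw [hvinv]; exact smul_nonneg (inv_nonneg.mpr hM.le) zero_le_one
  -- each `Ring.inverse (X i)` dominates `M⁻¹ • 1`
  have key : ∀ i, M⁻¹ • (star (C i) * C i) ≤ star (C i) * Ring.inverse (X i) * C i := by
    intro i
    obtain ⟨h0, hu, hle⟩ := hX i
    have hXinv : (↑v⁻¹ : H →L[ℂ] H) ≤ Ring.inverse (X i) := by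
      rw [← hu.unit_spec, Ring.inverse_unit]
      exact CStarAlgebra.inv_le_inv (a := hu.unit) (b := v) (by rwa [hu.unit_spec])
        (by rwa [hu.unit_spec])
    have := star_left_conjugate_le_conjugate hXinv (C i)
    refine le_trans (le_of_eq ?_) this
    rw [hvinv, mul_smul_comm, smul_mul_assoc, mul_one]
  -- the harmonic mean sum
  set S := ∑ i, star (C i) * Ring.inverse (X i) * C i with hS
  have hSle : (↑v⁻¹ : H →L[ℂ] H) ≤ S := by
    calc (↑v⁻¹ : H →L[ℂ] H) = ∑ i, M⁻¹ • (star (C i) * C i) := by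
          rw [← Finset.smul_sum, hC, hvinv]
      _ ≤ S := Finset.sum_le_sum fun i _ => key i
  have hS0 : (0 : H →L[ℂ] H) ≤ S := hvinv0.trans hSle
  have hSu : IsUnit S := CStarAlgebra.isUnit_of_le _ hSle (Units.isStrictlyPositive_iff.mpr hvinv0)
  -- conclude
  refine ⟨?_, ?_, ?_⟩
  · rw [← hSu.unit_spec, Ring.inverse_unit]
    exact CFC.inv_nonneg_of_nonneg hSu.unit (by rwa [hSu.unit_spec])
  · rw [← hSu.unit_spec, Ring.inverse_unit]
    exact hSu.unit⁻¹.isUnit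
  · rw [← hSu.unit_spec, Ring.inverse_unit]
    have := CStarAlgebra.inv_le_inv (a := v⁻¹) (b := hSu.unit) hvinv0
      (by rwa [hSu.unit_spec])
    rwa [inv_inv] at this
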